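/- Let p be an odd prime, m a positive integer with gcd(m−1,p−1)=1, NSQ the nonsquares in F_p^*, S(i,j)=∑_{c∈F_p^*} η(c)ξ_p^{c^{1−m}j−ci}, and g the quadratic Gauss sum. Then ∑_{i∈NSQ} S(i,j) = −((p−1)/2)·η(−1)·g if j=0, and ∑_{i∈NSQ} S(i,j) = ((η(−1)−η(j))/2)·g if j≠0. -/
import Mathlib


/-- `ξ_p^y` for `y : ZMod p`, where `ξ_p = exp(2πi/p)`. -/
noncomputable def xi (p : ℕ) (y : ZMod p) : ℂ :=
  Complex.exp (2 * Real.pi * Complex.I * y.val / p)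

/-- The quadratic Gauss sum `g = ∑_{y ∈ F_p^*} η(y) ξ_p^y`. -/
noncomputable def gaussSum' (p : ℕ) [Fact p.Prime] : ℂ :=
  ∑ y ∈ Finset.univ.filter (fun y : ZMod p => y ≠ 0),
    (quadraticChar (ZMod p) y : ℂ) * xi p y

/-- `S^{(m)}(i,j) = ∑_{c ∈ F_p^*} η(c) ξ_p^{c^{1-m} j - c i}`. -/
noncomputable def Sm (p : ℕ) [Fact p.Prime] (m : ℕ) (i j : ZMod p) : ℂ :=
  ∑ c ∈ Finset.univ.filter (fun c : ZMod p => c ≠ 0),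
    (quadraticChar (ZMod p) c : ℂ) * xi p (c ^ ((1 : ℤ) - m) * j - c * i)

open Finset

namespace SmAux

variable (p : ℕ) [Fact p.Prime]

/-- The quadratic character with values in `ℂ`. -/
noncomputable def χ : MulChar (ZMod p) ℂ :=
  (quadraticChar (ZMod p)).ringHomComp (Int.castRingHom ℂ)

lemma χ_apply (c : ZMod p) : χ p c = ((quadraticChar (ZMod p) c : ℤ) : ℂ) := rfl

lemma xi_eq (y : ZMod p) : xi p y = ZMod.stdAddChar y := by
  rw [ZMod.stdAddChar_apply, ZMod.toCircle_apply, xi]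

lemma χ_zero : χ p 0 = 0 := by
  rw [χ_apply, quadraticChar_zero, Int.cast_zero]

lemma χ_sq (c : ZMod p) (hc : c ≠ 0) : χ p c * χ p c = 1 := by
  rw [χ_apply, ← Int.cast_mul, ← pow_two, quadraticChar_sq_one hc, Int.cast_one]

lemma sum_psi (t : ZMod p) (ht : t ≠ 0) :
    ∑ x : ZMod p, ZMod.stdAddChar (x * t) = 0 := by
  have h := AddChar.sum_mulShift t (ZMod.isPrimitive_stdAddChar p)
  rw [if_neg ht] at h
  exact_mod_cast h

lemma twist (t : ZMod p) (ht : t ≠ 0) :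
    ∑ x : ZMod p, χ p x * ZMod.stdAddChar (t * x)
      = χ p t * gaussSum (χ p) ZMod.stdAddChar := by
  have h := gaussSum_mulShift (χ p) ZMod.stdAddChar (Units.mk0 t ht)
  have h2 : gaussSum (χ p) ((ZMod.stdAddChar).mulShift (Units.mk0 t ht))
      = ∑ x : ZMod p, χ p x * ZMod.stdAddChar (t * x) := by
    simp [gaussSum, AddChar.mulShift_apply]
  rw [h2] at h
  have hu : ((Units.mk0 t ht : (ZMod p)ˣ) : ZMod p) = t := rfl
  rw [hu] at h
  rw [← h, ← mul_assoc, χ_sq p t ht, one_mul]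

lemma gaussSum'_eq : gaussSum' p = gaussSum (χ p) ZMod.stdAddChar := by
  rw [gaussSum', gaussSum]
  rw [Finset.sum_filter_of_ne (fun y _ h => by
    intro hy0
    apply h
    rw [hy0, quadraticChar_zero, Int.cast_zero, zero_mul])]
  exact Finset.sum_congr rfl fun y _ => by rw [xi_eq, χ_apply]

lemma sum_NZ_psi (t : ZMod p) (ht : t ≠ 0) :
    ∑ x ∈ Finset.univ.filter (fun x : ZMod p => x ≠ 0), ZMod.stdAddChar (x * t) = -1 := by
  rw [Finset.filter_ne', Finset.sum_erase_eq_sub (Finset.mem_univ 0), sum_psi p t ht,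
    zero_mul, AddChar.map_zero_eq_one]
  ring

lemma sum_NZ_chi_psi (t : ZMod p) (ht : t ≠ 0) :
    ∑ x ∈ Finset.univ.filter (fun x : ZMod p => x ≠ 0),
        χ p x * ZMod.stdAddChar (t * x)
      = χ p t * gaussSum (χ p) ZMod.stdAddChar := by
  rw [Finset.sum_filter_of_ne (fun x _ h => by
    intro hx0
    apply h
    rw [hx0, χ_zero, zero_mul])]
  exact twist p t ht

lemma inner (c : ZMod p) (hc : c ≠ 0) :
    ∑ i ∈ Finset.univ.filter (fun i : ZMod p => quadraticChar (ZMod p) i = -1),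
        ZMod.stdAddChar (-(c * i))
      = (-1 - χ p (-1) * χ p c * gaussSum (χ p) ZMod.stdAddChar) / 2 := by
  have hS1 : ∑ i ∈ Finset.univ.filter (fun i : ZMod p => i ≠ 0),
      ZMod.stdAddChar (-(c * i)) = -1 := by
    have h := sum_NZ_psi p (-c) (neg_ne_zero.mpr hc)
    calc ∑ i ∈ Finset.univ.filter (fun i : ZMod p => i ≠ 0), ZMod.stdAddChar (-(c * i))
        = ∑ i ∈ Finset.univ.filter (fun i : ZMod p => i ≠ 0), ZMod.stdAddChar (i * (-c)) := by
          exact Finset.sum_congr rfl fun i _ => by ring_nf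
      _ = -1 := h
  have hS2 : ∑ i ∈ Finset.univ.filter (fun i : ZMod p => i ≠ 0),
      χ p i * ZMod.stdAddChar (-(c * i))
      = χ p (-1) * χ p c * gaussSum (χ p) ZMod.stdAddChar := by
    have h := sum_NZ_chi_psi p (-c) (neg_ne_zero.mpr hc)
    have hmc : χ p (-c) = χ p (-1) * χ p c := by rw [← map_mul, neg_one_mul]
    calc ∑ i ∈ Finset.univ.filter (fun i : ZMod p => i ≠ 0), χ p i * ZMod.stdAddChar (-(c * i))
        = ∑ i ∈ Finset.univ.filter (fun i : ZMod p => i ≠ 0),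
            χ p i * ZMod.stdAddChar ((-c) * i) := by
          exact Finset.sum_congr rfl fun i _ => by ring_nf
      _ = χ p (-1) * χ p c * gaussSum (χ p) ZMod.stdAddChar := by rw [h, hmc]
  have hsplit : ∑ i ∈ Finset.univ.filter (fun i : ZMod p => i ≠ 0),
      (1 - χ p i) * ZMod.stdAddChar (-(c * i))
      = 2 * ∑ i ∈ Finset.univ.filter (fun i : ZMod p => quadraticChar (ZMod p) i = -1),
          ZMod.stdAddChar (-(c * i)) := by
    rw [← Finset.sum_filter_add_sum_filter_not
      (Finset.univ.filter (fun i : ZMod p => i ≠ 0))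
      (fun i => quadraticChar (ZMod p) i = -1)]
    have h1 : (Finset.univ.filter (fun i : ZMod p => i ≠ 0)).filter
        (fun i => quadraticChar (ZMod p) i = -1)
        = Finset.univ.filter (fun i : ZMod p => quadraticChar (ZMod p) i = -1) := by
      ext i
      simp only [Finset.mem_filter, Finset.mem_univ, true_and]
      refine ⟨fun h => h.2, fun h => ⟨fun h0 => ?_, h⟩⟩
      rw [h0, quadraticChar_zero] at h
      exact absurd h (by norm_num)
    have h2 : ∑ i ∈ (Finset.univ.filter (fun i : ZMod p => i ≠ 0)).filter
        (fun i => ¬ quadraticChar (ZMod p) i = -1),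
        (1 - χ p i) * ZMod.stdAddChar (-(c * i)) = 0 := by
      apply Finset.sum_eq_zero
      intro i hi
      simp only [Finset.mem_filter, Finset.mem_univ, true_and] at hi
      rcases quadraticChar_dichotomy hi.1 with h | h
      · rw [χ_apply, h, Int.cast_one, sub_self, zero_mul]
      · exact absurd h hi.2
    rw [h2, add_zero, h1, Finset.mul_sum]
    apply Finset.sum_congr rfl
    intro i hi
    simp only [Finset.mem_filter, Finset.mem_univ, true_and] at hi
    rw [χ_apply, hi]
    norm_num
  have hexp : ∑ i ∈ Finset.univ.filter (fun i : ZMod p => i ≠ 0),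
      (1 - χ p i) * ZMod.stdAddChar (-(c * i))
      = -1 - χ p (-1) * χ p c * gaussSum (χ p) ZMod.stdAddChar := by
    simp_rw [sub_mul, one_mul]
    rw [Finset.sum_sub_distrib, hS1, hS2]
  rw [eq_div_iff (two_ne_zero : (2 : ℂ) ≠ 0)]
  linear_combination hexp - hsplit


lemma exists_inv_exp (m : ℕ) (hm : 1 ≤ m) (hgcd : Nat.gcd (m - 1) (p - 1) = 1) :
    ∃ a : ℤ, ∀ c : ZMod p, c ≠ 0 →
      (c ^ ((1 : ℤ) - m)) ^ a = c ∧ (c ^ a) ^ ((1 : ℤ) - m) = c := by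
  have hp2 := (Fact.out : p.Prime).two_le
  have hcop : IsCoprime ((1 : ℤ) - m) ((p : ℤ) - 1) := by
    rw [Int.isCoprime_iff_gcd_eq_one]
    have h1 : ((1 : ℤ) - m).natAbs = m - 1 := by omega
    have h2 : ((p : ℤ) - 1).natAbs = p - 1 := by omega
    rw [Int.gcd, h1, h2, hgcd]
  obtain ⟨u, v, huv⟩ := hcop
  have hpow : ∀ c : ZMod p, c ≠ 0 → ∀ k : ℤ, c ^ ((1 : ℤ) + ((p : ℤ) - 1) * k) = c := by
    intro c hc k
    have hc1 : c ^ ((p : ℤ) - 1) = (1 : ZMod p) := by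
      have he : ((p : ℤ) - 1) = ((p - 1 : ℕ) : ℤ) := by omega
      rw [he, zpow_natCast, ZMod.pow_card_sub_one_eq_one hc]
    rw [zpow_add₀ hc, zpow_one, zpow_mul, hc1, one_zpow, mul_one]
  refine ⟨u, fun c hc => ⟨?_, ?_⟩⟩
  · rw [← zpow_mul]
    have : ((1 : ℤ) - m) * u = 1 + ((p : ℤ) - 1) * (-v) := by linarith
    rw [this, hpow c hc]
  · rw [← zpow_mul]
    have : u * ((1 : ℤ) - m) = 1 + ((p : ℤ) - 1) * (-v) := by linarith
    rw [this, hpow c hc]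

lemma χ_zpow (hp : p ≠ 2) (m : ℕ) (hm : 1 ≤ m) (hgcd : Nat.gcd (m - 1) (p - 1) = 1)
    (c : ZMod p) (hc : c ≠ 0) : χ p (c ^ ((1 : ℤ) - m)) = χ p c := by
  have hodd : Odd (m - 1) := by
    rcases Nat.even_or_odd (m - 1) with he | ho
    · exfalso
      have hop : p % 2 = 1 := Nat.odd_iff.mp ((Fact.out : p.Prime).odd_of_ne_two hp)
      have hp2 := (Fact.out : p.Prime).two_le
      have hd1 : 2 ∣ m - 1 := he.two_dvd
      have hd2 : 2 ∣ p - 1 := by omega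
      have := Nat.dvd_gcd hd1 hd2
      rw [hgcd] at this
      omega
    · exact ho
  have hk : (1 : ℤ) - m = -((m - 1 : ℕ) : ℤ) := by omega
  rw [hk, zpow_neg, zpow_natCast]
  have hpk : c ^ (m - 1) ≠ 0 := pow_ne_zero _ hc
  have h1 : quadraticChar (ZMod p) (c ^ (m - 1)) = quadraticChar (ZMod p) c := by
    rw [map_pow]
    rcases quadraticChar_dichotomy hc with h | h <;> rw [h]
    · exact one_pow _
    · exact hodd.neg_one_pow
  have h2 : quadraticChar (ZMod p) (c ^ (m - 1)) *
      quadraticChar (ZMod p) ((c ^ (m - 1))⁻¹) = 1 := by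
    rw [← map_mul, mul_inv_cancel₀ hpk, map_one]
  have h3 : quadraticChar (ZMod p) ((c ^ (m - 1))⁻¹) = quadraticChar (ZMod p) c := by
    rcases quadraticChar_dichotomy hc with h | h <;> rw [h1, h] at h2 <;> rw [h] <;> linarith
  rw [χ_apply, h3, χ_apply]

lemma sum_reindex (m : ℕ) (hm : 1 ≤ m) (hgcd : Nat.gcd (m - 1) (p - 1) = 1)
    (G : ZMod p → ℂ) :
    ∑ c ∈ Finset.univ.filter (fun c : ZMod p => c ≠ 0), G (c ^ ((1 : ℤ) - m))
      = ∑ d ∈ Finset.univ.filter (fun d : ZMod p => d ≠ 0), G d := by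
  obtain ⟨a, ha⟩ := exists_inv_exp p m hm hgcd
  refine Finset.sum_nbij' (fun c => c ^ ((1 : ℤ) - m)) (fun d => d ^ a) ?_ ?_ ?_ ?_ ?_
  · intro c hc
    simp only [Finset.mem_filter, Finset.mem_univ, true_and] at *
    exact zpow_ne_zero _ hc
  · intro d hd
    simp only [Finset.mem_filter, Finset.mem_univ, true_and] at *
    exact zpow_ne_zero _ hd
  · intro c hc
    simp only [Finset.mem_filter, Finset.mem_univ, true_and] at hc
    exact (ha c hc).1
  · intro d hd
    simp only [Finset.mem_filter, Finset.mem_univ, true_and] at hd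
    exact (ha d hd).2
  · intro c _
    rfl

end SmAux

theorem sum_Sm_over_nonsquares (p : ℕ) [Fact p.Prime] (hp : p ≠ 2)
    (m : ℕ) (hm : 1 ≤ m) (hgcd : Nat.gcd (m - 1) (p - 1) = 1) (j : ZMod p) :
    ∑ i ∈ Finset.univ.filter (fun i : ZMod p => quadraticChar (ZMod p) i = -1),
        Sm p m i j
      = if j = 0 then
          -(((p : ℂ) - 1) / 2) * (quadraticChar (ZMod p) (-1) : ℂ) * gaussSum' p
        else
          (((quadraticChar (ZMod p) (-1) : ℂ) - (quadraticChar (ZMod p) j : ℂ)) / 2)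
            * gaussSum' p := by
  classical
  have hgs : gaussSum' p = gaussSum (SmAux.χ p) ZMod.stdAddChar := SmAux.gaussSum'_eq p
  set g := gaussSum (SmAux.χ p) ZMod.stdAddChar with hg
  have step1 : ∑ i ∈ Finset.univ.filter (fun i : ZMod p => quadraticChar (ZMod p) i = -1),
        Sm p m i j
      = ∑ c ∈ Finset.univ.filter (fun c : ZMod p => c ≠ 0),
          (SmAux.χ p c * ZMod.stdAddChar (c ^ ((1 : ℤ) - m) * j)) *
            ∑ i ∈ Finset.univ.filter (fun i : ZMod p => quadraticChar (ZMod p) i = -1),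
              ZMod.stdAddChar (-(c * i)) := by
    unfold Sm
    rw [Finset.sum_comm]
    apply Finset.sum_congr rfl
    intro c _
    rw [Finset.mul_sum]
    apply Finset.sum_congr rfl
    intro i _
    rw [SmAux.xi_eq, sub_eq_add_neg, AddChar.map_add_eq_mul, ← SmAux.χ_apply]
    ring
  have step2 : ∀ c ∈ Finset.univ.filter (fun c : ZMod p => c ≠ 0),
      (SmAux.χ p c * ZMod.stdAddChar (c ^ ((1 : ℤ) - m) * j)) *
          (∑ i ∈ Finset.univ.filter (fun i : ZMod p => quadraticChar (ZMod p) i = -1),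
            ZMod.stdAddChar (-(c * i)))
      = -(1/2) * (SmAux.χ p c * ZMod.stdAddChar (c ^ ((1 : ℤ) - m) * j))
        - (SmAux.χ p (-1) * g / 2) * ZMod.stdAddChar (c ^ ((1 : ℤ) - m) * j) := by
    intro c hc
    simp only [Finset.mem_filter, Finset.mem_univ, true_and] at hc
    rw [SmAux.inner p c hc]
    have hsq := SmAux.χ_sq p c hc
    linear_combination (-(SmAux.χ p (-1) * g / 2) *
      ZMod.stdAddChar (c ^ ((1 : ℤ) - m) * j)) * hsq
  rw [step1, Finset.sum_congr rfl step2, Finset.sum_sub_distrib,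
    ← Finset.mul_sum, ← Finset.mul_sum]
  have hA : ∑ c ∈ Finset.univ.filter (fun c : ZMod p => c ≠ 0),
      SmAux.χ p c * ZMod.stdAddChar (c ^ ((1 : ℤ) - m) * j)
      = ∑ d ∈ Finset.univ.filter (fun d : ZMod p => d ≠ 0),
          SmAux.χ p d * ZMod.stdAddChar (d * j) := by
    rw [← SmAux.sum_reindex p m hm hgcd
      (fun d => SmAux.χ p d * ZMod.stdAddChar (d * j))]
    apply Finset.sum_congr rfl
    intro c hc
    simp only [Finset.mem_filter, Finset.mem_univ, true_and] at hc
    rw [SmAux.χ_zpow p hp m hm hgcd c hc]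
  have hB : ∑ c ∈ Finset.univ.filter (fun c : ZMod p => c ≠ 0),
      ZMod.stdAddChar (c ^ ((1 : ℤ) - m) * j)
      = ∑ d ∈ Finset.univ.filter (fun d : ZMod p => d ≠ 0),
          ZMod.stdAddChar (d * j) :=
    SmAux.sum_reindex p m hm hgcd (fun d => ZMod.stdAddChar (d * j))
  rw [hA, hB]
  by_cases hj : j = 0
  · subst hj
    rw [if_pos rfl]
    have hA0 : ∑ d ∈ Finset.univ.filter (fun d : ZMod p => d ≠ 0),
        SmAux.χ p d * ZMod.stdAddChar (d * 0) = 0 := by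
      have h1 : ∑ d ∈ Finset.univ.filter (fun d : ZMod p => d ≠ 0), SmAux.χ p d = 0 := by
        rw [Finset.sum_filter_of_ne (fun d _ h => by
          intro hd0
          apply h
          rw [hd0, SmAux.χ_zero])]
        have hrc : ringChar (ZMod p) ≠ 2 := by
          rw [ZMod.ringChar_zmod_n]; exact hp
        have h2 := quadraticChar_sum_zero hrc
        calc ∑ d : ZMod p, SmAux.χ p d
            = ((∑ d : ZMod p, quadraticChar (ZMod p) d : ℤ) : ℂ) := by
              rw [Int.cast_sum]; rfl
          _ = 0 := by rw [h2, Int.cast_zero]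
      calc ∑ d ∈ Finset.univ.filter (fun d : ZMod p => d ≠ 0),
            SmAux.χ p d * ZMod.stdAddChar (d * 0)
          = ∑ d ∈ Finset.univ.filter (fun d : ZMod p => d ≠ 0), SmAux.χ p d := by
            apply Finset.sum_congr rfl
            intro d _
            rw [mul_zero, AddChar.map_zero_eq_one, mul_one]
        _ = 0 := h1
    have hB0 : ∑ d ∈ Finset.univ.filter (fun d : ZMod p => d ≠ 0),
        ZMod.stdAddChar (d * 0) = (p : ℂ) - 1 := by
      have hcard : (Finset.univ.filter (fun d : ZMod p => d ≠ 0)).card = p - 1 := by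
        rw [Finset.filter_ne', Finset.card_erase_of_mem (Finset.mem_univ 0)]
        simp [ZMod.card]
      calc ∑ d ∈ Finset.univ.filter (fun d : ZMod p => d ≠ 0), ZMod.stdAddChar (d * 0)
          = ∑ _d ∈ Finset.univ.filter (fun d : ZMod p => d ≠ 0), (1 : ℂ) := by
            apply Finset.sum_congr rfl
            intro d _
            rw [mul_zero, AddChar.map_zero_eq_one]
        _ = ((Finset.univ.filter (fun d : ZMod p => d ≠ 0)).card : ℂ) := by
            rw [Finset.sum_const, nsmul_eq_mul, mul_one]
        _ = (p : ℂ) - 1 := by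
            rw [hcard]
            have hp1 := (Fact.out : p.Prime).one_le
            push_cast [Nat.cast_sub hp1]
            ring
    rw [hA0, hB0, hgs, ← SmAux.χ_apply]
    ring
  · rw [if_neg hj]
    have hAj : ∑ d ∈ Finset.univ.filter (fun d : ZMod p => d ≠ 0),
        SmAux.χ p d * ZMod.stdAddChar (d * j) = SmAux.χ p j * g := by
      have h := SmAux.sum_NZ_chi_psi p j hj
      calc ∑ d ∈ Finset.univ.filter (fun d : ZMod p => d ≠ 0),
            SmAux.χ p d * ZMod.stdAddChar (d * j)
          = ∑ d ∈ Finset.univ.filter (fun d : ZMod p => d ≠ 0),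
              SmAux.χ p d * ZMod.stdAddChar (j * d) := by
            apply Finset.sum_congr rfl
            intro d _
            rw [mul_comm d j]
        _ = SmAux.χ p j * g := h
    have hBj : ∑ d ∈ Finset.univ.filter (fun d : ZMod p => d ≠ 0),
        ZMod.stdAddChar (d * j) = -1 := SmAux.sum_NZ_psi p j hj
    rw [hAj, hBj, hgs, ← SmAux.χ_apply, ← SmAux.χ_apply]
    ring
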